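/- Let n ≥ 3, let λ be symmetric nonnegative real edge weights on the complete graph with vertex set {1,…,n} (λ_{jk} = λ_{kj} ≥ 0, λ_{jj} = 0), and set B = max over j ∈ {1,…,n} and over subsets A ⊆ {1,…,n}\{j} with |A| = n − 2 of Σ_{k∈A} λ_{jk}. If x_1,…,x_n are complex numbers with |x_i| > 2√B for every i, then the matching polynomial μ(x_1,…,x_n) = Σ_{M ∈ 𝓜} (∏_{i not covered by M} x_i) · (∏_{{j,k} ∈ M} λ_{jk}) is different from zero. -/

import Mathlib

open Finset Classical

/-- A matching of the complete graph induced on the vertex set `S ⊆ Fin n`,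
represented as a finset of ordered pairs `(j, k)` with `j < k` (each such pair
encoding the unordered edge `{j, k}`), no two of which share a vertex. -/
def IsMatching (n : ℕ) (S : Finset (Fin n)) (M : Finset (Fin n × Fin n)) : Prop :=
  (∀ p ∈ M, p.1 < p.2 ∧ p.1 ∈ S ∧ p.2 ∈ S) ∧
  ∀ p ∈ M, ∀ q ∈ M, p ≠ q → p.1 ≠ q.1 ∧ p.1 ≠ q.2 ∧ p.2 ≠ q.1 ∧ p.2 ≠ q.2

/-- The matching polynomial of the complete graph induced on `S ⊆ Fin n`, with
edge weights `lam` and vertex variables `x`: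
`μ_S = Σ_{M matching of S} (Π_{i ∈ S not covered by M} x i) · (Π_{{j,k} ∈ M} lam j k)`. -/
noncomputable def mu (n : ℕ) (lam : Fin n → Fin n → ℝ) (x : Fin n → ℂ)
    (S : Finset (Fin n)) : ℂ :=
  ∑ M ∈ univ.filter (fun M : Finset (Fin n × Fin n) => IsMatching n S M),
    (∏ v ∈ S.filter (fun v => ∀ p ∈ M, v ≠ p.1 ∧ v ≠ p.2), x v) *
    ∏ p ∈ M, (lam p.1 p.2 : ℂ)

def hlEdge {n : ℕ} (v k : Fin n) : Fin n × Fin n := if v < k then (v, k) else (k, v)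

lemma hlEdge_spec {n : ℕ} {v k : Fin n} (h : v ≠ k) :
    (hlEdge v k = (v, k) ∧ v < k) ∨ (hlEdge v k = (k, v) ∧ k < v) := by
  unfold hlEdge
  rcases lt_or_gt_of_ne h with hlt | hgt
  · exact Or.inl ⟨if_pos hlt, hlt⟩
  · exact Or.inr ⟨if_neg (not_lt_of_gt hgt), hgt⟩

lemma hlEdge_fst_lt {n : ℕ} {v k : Fin n} (h : v ≠ k) :
    (hlEdge v k).1 < (hlEdge v k).2 := by
  rcases hlEdge_spec h with ⟨he, hlt⟩ | ⟨he, hlt⟩ <;> rw [he] <;> exact hlt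

lemma hlEdge_endpoints {n : ℕ} {v k : Fin n} (h : v ≠ k) :
    ((hlEdge v k).1 = v ∧ (hlEdge v k).2 = k) ∨ ((hlEdge v k).1 = k ∧ (hlEdge v k).2 = v) := by
  rcases hlEdge_spec h with ⟨he, _⟩ | ⟨he, _⟩ <;> rw [he] <;> simp

lemma hlEdge_inj {n : ℕ} {v a b : Fin n} (ha : v ≠ a) (hb : v ≠ b)
    (h : hlEdge v a = hlEdge v b) : a = b := by
  rcases hlEdge_spec ha with ⟨hea, _⟩ | ⟨hea, _⟩ <;>
  rcases hlEdge_spec hb with ⟨heb, _⟩ | ⟨heb, _⟩ <;>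
  rw [hea, heb] at h <;>
  simp [Prod.ext_iff] at h <;> tauto

lemma mu_empty (n : ℕ) (lam : Fin n → Fin n → ℝ) (x : Fin n → ℂ) :
    mu n lam x ∅ = 1 := by
  classical
  unfold mu
  rw [Finset.sum_eq_single_of_mem (∅ : Finset (Fin n × Fin n))]
  · simp
  · simp [IsMatching]
  · intro M hM hne
    exfalso
    rw [mem_filter] at hM
    obtain ⟨p, hp⟩ := Finset.nonempty_iff_ne_empty.mpr hne
    exact absurd (hM.2.1 p hp).2.1 (by simp)

lemma matching_share_vertex {n : ℕ} {S : Finset (Fin n)} {M : Finset (Fin n × Fin n)}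
    (hM : IsMatching n S M) {p q : Fin n × Fin n} (hp : p ∈ M) (hq : q ∈ M)
    {v : Fin n} (hvp : v = p.1 ∨ v = p.2) (hvq : v = q.1 ∨ v = q.2) : p = q := by
  by_contra hne
  obtain ⟨h1, h2, h3, h4⟩ := hM.2 p hp q hq hne
  rcases hvp with h | h <;> rcases hvq with h' | h'
  exacts [h1 (h.symm.trans h'), h2 (h.symm.trans h'), h3 (h.symm.trans h'),
    h4 (h.symm.trans h')]

lemma edge_sum {n : ℕ} (lam : Fin n → Fin n → ℝ) (x : Fin n → ℂ)
    (hsymm : ∀ j k, lam j k = lam k j)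
    {S : Finset (Fin n)} {v k : Fin n} (hv : v ∈ S) (hk : k ∈ S.erase v) :
    ∑ M ∈ univ.filter (fun M : Finset (Fin n × Fin n) =>
        IsMatching n S M ∧ hlEdge v k ∈ M),
      ((∏ w ∈ S.filter (fun w => ∀ p ∈ M, w ≠ p.1 ∧ w ≠ p.2), x w) *
        ∏ p ∈ M, (lam p.1 p.2 : ℂ))
    = (lam v k : ℂ) * mu n lam x ((S.erase v).erase k) := by
  classical
  have hkS : k ∈ S := mem_of_mem_erase hk
  have hkv : k ≠ v := ne_of_mem_erase hk
  have hvk : v ≠ k := hkv.symm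
  set e := hlEdge v k with he_def
  have heps : (e.1 = v ∧ e.2 = k) ∨ (e.1 = k ∧ e.2 = v) := hlEdge_endpoints hvk
  have he_lt : e.1 < e.2 := hlEdge_fst_lt hvk
  -- characterizing endpoints of e
  have hmemV : ∀ w : Fin n, (w = e.1 ∨ w = e.2) ↔ (w = v ∨ w = k) := by
    intro w
    rcases heps with ⟨h1, h2⟩ | ⟨h1, h2⟩ <;> rw [h1, h2] <;> tauto
  have hlam_e : (lam e.1 e.2 : ℝ) = lam v k := by
    rcases heps with ⟨h1, h2⟩ | ⟨h1, h2⟩ <;> rw [h1, h2]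
    exact hsymm k v
  rw [mu, mul_sum]
  refine Finset.sum_nbij' (fun M => M.erase e) (fun M' => insert e M') ?_ ?_ ?_ ?_ ?_
  · -- hi : image is a matching of (S.erase v).erase k
    intro M hM
    simp only [mem_filter, mem_univ, true_and] at hM ⊢
    obtain ⟨⟨hM1, hM2⟩, heM⟩ := hM
    constructor
    · intro p hp
      have hpM : p ∈ M := mem_of_mem_erase hp
      have hpe : p ≠ e := ne_of_mem_erase hp
      obtain ⟨d1, d2, d3, d4⟩ := hM2 p hpM e heM hpe
      have hp1 : p.1 ≠ v ∧ p.1 ≠ k := by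
        rcases heps with ⟨h1, h2⟩ | ⟨h1, h2⟩ <;> rw [← h1, ← h2] <;> tauto
      have hp2 : p.2 ≠ v ∧ p.2 ≠ k := by
        rcases heps with ⟨h1, h2⟩ | ⟨h1, h2⟩ <;> rw [← h1, ← h2] <;> tauto
      refine ⟨(hM1 p hpM).1, ?_, ?_⟩ <;> rw [mem_erase, mem_erase]
      · exact ⟨hp1.2, hp1.1, (hM1 p hpM).2.1⟩
      · exact ⟨hp2.2, hp2.1, (hM1 p hpM).2.2⟩
    · intro p hp q hq hpq
      exact hM2 p (mem_of_mem_erase hp) q (mem_of_mem_erase hq) hpq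
  · -- hj : insert e M' is a matching of S containing e
    intro M' hM'
    simp only [mem_filter, mem_univ, true_and] at hM' ⊢
    obtain ⟨hM1, hM2⟩ := hM'
    have hM'av : ∀ p ∈ M', p.1 ≠ v ∧ p.1 ≠ k ∧ p.2 ≠ v ∧ p.2 ≠ k := by
      intro p hp
      have h1 := (hM1 p hp).2.1
      have h2 := (hM1 p hp).2.2
      rw [mem_erase, mem_erase] at h1 h2
      exact ⟨h1.2.1, h1.1, h2.2.1, h2.1⟩
    have heM' : e ∉ M' := by
      intro hcon
      have := (hM'av e hcon).1
      have := (hM'av e hcon).2.1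
      rcases heps with ⟨h1, _⟩ | ⟨h1, _⟩
      · exact (hM'av e hcon).1 h1
      · exact (hM'av e hcon).2.1 h1
    refine ⟨⟨?_, ?_⟩, mem_insert_self e M'⟩
    · intro p hp
      rcases mem_insert.mp hp with rfl | hp'
      · refine ⟨he_lt, ?_, ?_⟩
        · rcases heps with ⟨h1, _⟩ | ⟨h1, _⟩ <;> rw [h1] <;> assumption
        · rcases heps with ⟨_, h2⟩ | ⟨_, h2⟩ <;> rw [h2] <;> assumption
      · refine ⟨(hM1 p hp').1, ?_, ?_⟩
        · exact mem_of_mem_erase (mem_of_mem_erase (hM1 p hp').2.1)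
        · exact mem_of_mem_erase (mem_of_mem_erase (hM1 p hp').2.2)
    · intro p hp q hq hpq
      have key : ∀ r ∈ M', e.1 ≠ r.1 ∧ e.1 ≠ r.2 ∧ e.2 ≠ r.1 ∧ e.2 ≠ r.2 := by
        intro r hr
        obtain ⟨a1, a2, a3, a4⟩ := hM'av r hr
        rcases heps with ⟨h1, h2⟩ | ⟨h1, h2⟩ <;> rw [h1, h2]
        · exact ⟨fun h => a1 h.symm, fun h => a3 h.symm, fun h => a2 h.symm,
            fun h => a4 h.symm⟩
        · exact ⟨fun h => a2 h.symm, fun h => a4 h.symm, fun h => a1 h.symm,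
            fun h => a3 h.symm⟩
      rcases mem_insert.mp hp with rfl | hp' <;> rcases mem_insert.mp hq with rfl | hq'
      · exact absurd rfl hpq
      · exact key q hq'
      · obtain ⟨a1, a2, a3, a4⟩ := key p hp'
        exact ⟨Ne.symm a1, Ne.symm a3, Ne.symm a2, Ne.symm a4⟩
      · exact hM2 p hp' q hq' hpq
  · -- left inverse
    intro M hM
    simp only [mem_filter, mem_univ, true_and] at hM
    exact Finset.insert_erase hM.2
  · -- right inverse
    intro M' hM'
    simp only [mem_filter, mem_univ, true_and] at hM'
    apply Finset.erase_insert
    intro hcon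
    have h1 := (hM'.1 e hcon).2.1
    rw [mem_erase, mem_erase] at h1
    rcases heps with ⟨hh, _⟩ | ⟨hh, _⟩
    · exact h1.2.1 hh
    · exact h1.1 hh
  · -- values agree
    intro M hM
    simp only [mem_filter, mem_univ, true_and] at hM
    obtain ⟨hMm, heM⟩ := hM
    have hprod : (∏ p ∈ M, (lam p.1 p.2 : ℂ))
        = (lam v k : ℂ) * ∏ p ∈ M.erase e, (lam p.1 p.2 : ℂ) := by
      rw [← Finset.mul_prod_erase M _ heM, hlam_e]
    have hxset : S.filter (fun w => ∀ p ∈ M, w ≠ p.1 ∧ w ≠ p.2)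
        = ((S.erase v).erase k).filter
            (fun w => ∀ p ∈ M.erase e, w ≠ p.1 ∧ w ≠ p.2) := by
      ext w
      simp only [mem_filter, mem_erase]
      constructor
      · rintro ⟨hwS, hwQ⟩
        have hwe := hwQ e heM
        have hwv : w ≠ v ∧ w ≠ k := by
          rcases heps with ⟨h1, h2⟩ | ⟨h1, h2⟩ <;> rw [← h1, ← h2] <;> tauto
        exact ⟨⟨hwv.2, hwv.1, hwS⟩, fun p hp => hwQ p hp.2⟩
      · rintro ⟨⟨hwk, hwv, hwS⟩, hwQ⟩
        refine ⟨hwS, fun p hp => ?_⟩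
        by_cases hpe : p = e
        · subst hpe
          constructor
          · rcases heps with ⟨h1, _⟩ | ⟨h1, _⟩ <;> rw [h1] <;> assumption
          · rcases heps with ⟨_, h2⟩ | ⟨_, h2⟩ <;> rw [h2] <;> assumption
        · exact hwQ p ⟨hpe, hp⟩
    rw [hprod, hxset]
    ring

lemma mu_rec {n : ℕ} (lam : Fin n → Fin n → ℝ) (x : Fin n → ℂ)
    (hsymm : ∀ j k, lam j k = lam k j)
    {S : Finset (Fin n)} {v : Fin n} (hv : v ∈ S) :
    mu n lam x S = x v * mu n lam x (S.erase v)
      + ∑ k ∈ S.erase v, (lam v k : ℂ) * mu n lam x ((S.erase v).erase k) := by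
  classical
  have key := Finset.sum_filter_add_sum_filter_not
      (univ.filter (fun M : Finset (Fin n × Fin n) => IsMatching n S M))
      (fun M => ∀ p ∈ M, v ≠ p.1 ∧ v ≠ p.2)
      (fun M => (∏ w ∈ S.filter (fun w => ∀ p ∈ M, w ≠ p.1 ∧ w ≠ p.2), x w) *
        ∏ p ∈ M, (lam p.1 p.2 : ℂ))
  rw [mu, ← key]
  congr 1
  · -- uncovered part
    have E1 : ((univ.filter (fun M : Finset (Fin n × Fin n) => IsMatching n S M)).filter
        (fun M => ∀ p ∈ M, v ≠ p.1 ∧ v ≠ p.2))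
        = univ.filter (fun M : Finset (Fin n × Fin n) => IsMatching n (S.erase v) M) := by
      ext M
      simp only [mem_filter, mem_univ, true_and]
      simp only [IsMatching, mem_erase]
      constructor
      · rintro ⟨⟨h1, h2⟩, h3⟩
        exact ⟨fun p hp => ⟨(h1 p hp).1, ⟨Ne.symm (h3 p hp).1, (h1 p hp).2.1⟩,
          ⟨Ne.symm (h3 p hp).2, (h1 p hp).2.2⟩⟩, h2⟩
      · rintro ⟨h1, h2⟩
        exact ⟨⟨fun p hp => ⟨(h1 p hp).1, (h1 p hp).2.1.2, (h1 p hp).2.2.2⟩, h2⟩,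
          fun p hp => ⟨Ne.symm (h1 p hp).2.1.1, Ne.symm (h1 p hp).2.2.1⟩⟩
    rw [E1, mu, mul_sum]
    apply Finset.sum_congr rfl
    intro M hM
    simp only [mem_filter, mem_univ, true_and] at hM
    have hvQ : ∀ p ∈ M, v ≠ p.1 ∧ v ≠ p.2 := by
      intro p hp
      have h1 := (hM.1 p hp).2.1
      have h2 := (hM.1 p hp).2.2
      rw [mem_erase] at h1 h2
      exact ⟨Ne.symm h1.1, Ne.symm h2.1⟩
    have hset : S.filter (fun w => ∀ p ∈ M, w ≠ p.1 ∧ w ≠ p.2)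
        = insert v ((S.erase v).filter (fun w => ∀ p ∈ M, w ≠ p.1 ∧ w ≠ p.2)) := by
      ext w
      simp only [mem_filter, mem_insert, mem_erase]
      constructor
      · rintro ⟨hwS, hwQ⟩
        by_cases hwv : w = v
        · exact Or.inl hwv
        · exact Or.inr ⟨⟨hwv, hwS⟩, hwQ⟩
      · rintro (rfl | ⟨⟨hwv, hwS⟩, hwQ⟩)
        · exact ⟨hv, hvQ⟩
        · exact ⟨hwS, hwQ⟩
    have hvnot : v ∉ (S.erase v).filter (fun w => ∀ p ∈ M, w ≠ p.1 ∧ w ≠ p.2) := by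
      simp [mem_filter]
    rw [hset, Finset.prod_insert hvnot, mul_assoc]
  · -- covered part
    have step1 : ∀ M ∈ ((univ.filter
          (fun M : Finset (Fin n × Fin n) => IsMatching n S M)).filter
          (fun M => ¬ ∀ p ∈ M, v ≠ p.1 ∧ v ≠ p.2)),
        ((∏ w ∈ S.filter (fun w => ∀ p ∈ M, w ≠ p.1 ∧ w ≠ p.2), x w) *
          ∏ p ∈ M, (lam p.1 p.2 : ℂ))
        = ∑ k ∈ S.erase v, if hlEdge v k ∈ M then
            ((∏ w ∈ S.filter (fun w => ∀ p ∈ M, w ≠ p.1 ∧ w ≠ p.2), x w) *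
              ∏ p ∈ M, (lam p.1 p.2 : ℂ)) else 0 := by
      intro M hM
      simp only [mem_filter, mem_univ, true_and] at hM
      obtain ⟨hMm, hMcov⟩ := hM
      push_neg at hMcov
      obtain ⟨p, hpM, hvp⟩ := hMcov
      have hvp' : v = p.1 ∨ v = p.2 := by tauto
      -- determine k0
      have hk0 : ∃ k0 ∈ S.erase v, hlEdge v k0 = p := by
        rcases hvp' with h | h
        · refine ⟨p.2, ?_, ?_⟩
          · rw [mem_erase]
            refine ⟨?_, (hMm.1 p hpM).2.2⟩
            intro hcon
            exact absurd (h ▸ hcon ▸ (hMm.1 p hpM).1) (lt_irrefl _)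
          · have hlt : v < p.2 := h ▸ (hMm.1 p hpM).1
            rw [hlEdge, if_pos hlt, h]
        · refine ⟨p.1, ?_, ?_⟩
          · rw [mem_erase]
            refine ⟨?_, (hMm.1 p hpM).2.1⟩
            intro hcon
            exact absurd (h ▸ hcon ▸ (hMm.1 p hpM).1) (lt_irrefl _)
          · have hlt : p.1 < v := h ▸ (hMm.1 p hpM).1
            rw [hlEdge, if_neg (not_lt_of_gt hlt), h]
      obtain ⟨k0, hk0mem, hk0e⟩ := hk0
      rw [Finset.sum_eq_single_of_mem k0 hk0mem]
      · rw [if_pos (hk0e ▸ hpM)]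
      · intro k' hk' hk'ne
        rw [if_neg]
        intro hcon
        have hvk' : v ≠ k' := (ne_of_mem_erase hk').symm
        have hvk0 : v ≠ k0 := (ne_of_mem_erase hk0mem).symm
        have hv1 : v = (hlEdge v k').1 ∨ v = (hlEdge v k').2 := by
          rcases hlEdge_endpoints hvk' with ⟨h1, _⟩ | ⟨_, h2⟩
          · exact Or.inl h1.symm
          · exact Or.inr h2.symm
        have heq : hlEdge v k' = p :=
          matching_share_vertex hMm hcon hpM hv1 hvp'
        exact hk'ne (hlEdge_inj hvk' hvk0 (heq.trans hk0e.symm))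
    rw [Finset.sum_congr rfl step1, Finset.sum_comm]
    apply Finset.sum_congr rfl
    intro k hk
    rw [← Finset.sum_filter, ← edge_sum lam x hsymm hv hk]
    apply Finset.sum_congr
    · ext M
      simp only [mem_filter, mem_univ, true_and]
      constructor
      · rintro ⟨⟨hMm, _⟩, heM⟩
        exact ⟨hMm, heM⟩
      · rintro ⟨hMm, heM⟩
        refine ⟨⟨hMm, ?_⟩, heM⟩
        intro hall
        have hvk : v ≠ k := (ne_of_mem_erase hk).symm
        have := hall (hlEdge v k) heM
        rcases hlEdge_endpoints hvk with ⟨h1, _⟩ | ⟨_, h2⟩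
        · exact this.1 h1.symm
        · exact this.2 h2.symm
    · intro M _
      rfl

lemma mu_abs_lower {n : ℕ} (lam : Fin n → Fin n → ℝ) (x : Fin n → ℂ)
    (hsymm : ∀ j k, lam j k = lam k j) (hnonneg : ∀ j k, 0 ≤ lam j k)
    {S : Finset (Fin n)} {v : Fin n} (hv : v ∈ S) :
    ‖x v‖ * ‖mu n lam x (S.erase v)‖
      - ∑ k ∈ S.erase v, lam v k * ‖mu n lam x ((S.erase v).erase k)‖
    ≤ ‖mu n lam x S‖ := by
  rw [mu_rec lam x hsymm hv]
  set a := x v * mu n lam x (S.erase v) with ha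
  set b := ∑ k ∈ S.erase v, (lam v k : ℂ) * mu n lam x ((S.erase v).erase k) with hb
  have h1 : ‖a‖ ≤ ‖a + b‖ + ‖b‖ := by
    have : a = (a + b) + (-b) := by ring
    calc ‖a‖ = ‖(a + b) + (-b)‖ := by rw [← this]
      _ ≤ ‖a + b‖ + ‖-b‖ := norm_add_le _ _
      _ = ‖a + b‖ + ‖b‖ := by rw [norm_neg]
  have h2 : ‖b‖
      ≤ ∑ k ∈ S.erase v, lam v k * ‖mu n lam x ((S.erase v).erase k)‖ := by
    refine (norm_sum_le _ _).trans ?_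
    apply Finset.sum_le_sum
    intro k _
    rw [norm_mul, Complex.norm_real, Real.norm_eq_abs, abs_of_nonneg (hnonneg v k)]
  have h3 : ‖a‖
      = ‖x v‖ * ‖mu n lam x (S.erase v)‖ := norm_mul _ _
  linarith


/-- **Heilmann–Lieb theorem, disk part.** For `n ≥ 3`, let `B` be the maximum over
vertices `j` and subsets `A ⊆ {1,…,n}∖{j}` with `|A| = n - 2` of `Σ_{k ∈ A} lam j k`.
If `|x i| > 2√B` for every `i`, then the matching polynomial is nonzero. -/
theorem heilmann_lieb_disk (n : ℕ) (hn : 3 ≤ n)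
    (lam : Fin n → Fin n → ℝ)
    (hsymm : ∀ j k, lam j k = lam k j)
    (hnonneg : ∀ j k, 0 ≤ lam j k)
    (hdiag : ∀ j, lam j j = 0)
    (B : ℝ)
    (hB : IsGreatest {s : ℝ | ∃ j : Fin n, ∃ A : Finset (Fin n),
        A ⊆ Finset.univ \ {j} ∧ A.card = n - 2 ∧ s = ∑ k ∈ A, lam j k} B)
    (x : Fin n → ℂ) (hx : ∀ i, 2 * Real.sqrt B < ‖x i‖) :
    mu n lam x Finset.univ ≠ 0 := by
  classical
  have hB0 : 0 ≤ B := by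
    obtain ⟨j, A, hA1, hA2, hs⟩ := hB.1
    exact hs ▸ Finset.sum_nonneg fun k _ => hnonneg j k
  have hcard_sdiff : ∀ j : Fin n, (univ \ {j} : Finset (Fin n)).card = n - 1 := by
    intro j
    rw [Finset.card_sdiff_of_subset (by simp)]
    simp
  have hlam_le : ∀ j k : Fin n, j ≠ k → lam j k ≤ B := by
    intro j k hjk
    have hksub : ({k} : Finset (Fin n)) ⊆ univ \ {j} := by
      intro w hw
      rw [Finset.mem_singleton] at hw
      subst hw
      simp [hjk.symm]
    have hc1 : ({k} : Finset (Fin n)).card ≤ n - 2 := by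
      rw [Finset.card_singleton]; omega
    have hc2 : n - 2 ≤ (univ \ {j} : Finset (Fin n)).card := by
      rw [hcard_sdiff]; omega
    obtain ⟨A, hkA, hAsub, hAcard⟩ := Finset.exists_subsuperset_card_eq hksub hc1 hc2
    have h1 : lam j k ≤ ∑ i ∈ A, lam j i :=
      Finset.single_le_sum (fun i _ => hnonneg j i) (hkA (Finset.mem_singleton_self k))
    have h2 : (∑ i ∈ A, lam j i) ≤ B := hB.2 ⟨j, A, hAsub, hAcard, rfl⟩
    linarith
  by_cases hBzero : B = 0
  · -- all weights vanish; mu = product of the x's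
    have hall : ∀ p : Fin n × Fin n, p.1 < p.2 → lam p.1 p.2 = 0 := fun p h =>
      le_antisymm (hBzero ▸ hlam_le _ _ (ne_of_lt h)) (hnonneg _ _)
    have hmu : mu n lam x univ = ∏ i, x i := by
      rw [mu, Finset.sum_eq_single_of_mem (∅ : Finset (Fin n × Fin n))]
      · simp
      · simp [IsMatching]
      · intro M hM hne
        simp only [mem_filter, mem_univ, true_and] at hM
        obtain ⟨p, hp⟩ := Finset.nonempty_iff_ne_empty.mpr hne
        have hz : (lam p.1 p.2 : ℂ) = 0 := by
          rw [hall p (hM.1 p hp).1]; simp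
        rw [Finset.prod_eq_zero hp hz, mul_zero]
    rw [hmu]
    apply Finset.prod_ne_zero_iff.mpr
    intro i _
    have hxi := hx i
    rw [hBzero, Real.sqrt_zero, mul_zero] at hxi
    exact fun h => by rw [h] at hxi; simp at hxi
  · -- B > 0
    set r := Real.sqrt B with hr_def
    have hrpos : 0 < r := Real.sqrt_pos.mpr (lt_of_le_of_ne hB0 (Ne.symm hBzero))
    have hr2 : r * r = B := Real.mul_self_sqrt hB0
    have hsum_le : ∀ (S : Finset (Fin n)) (v : Fin n), v ∈ S → S.card ≤ n - 1 →
        (∑ k ∈ S.erase v, lam v k) ≤ B := by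
      intro S v hv hScard
      have hsub : S.erase v ⊆ univ \ {v} := by
        intro w hw
        rw [Finset.mem_sdiff]
        exact ⟨mem_univ w, by simp [ne_of_mem_erase hw]⟩
      have hc1 : (S.erase v).card ≤ n - 2 := by
        rw [Finset.card_erase_of_mem hv]; omega
      have hc2 : n - 2 ≤ (univ \ {v} : Finset (Fin n)).card := by
        rw [hcard_sdiff]; omega
      obtain ⟨A, hsubA, hAsub, hAcard⟩ := Finset.exists_subsuperset_card_eq hsub hc1 hc2
      have h1 : (∑ k ∈ S.erase v, lam v k) ≤ ∑ k ∈ A, lam v k :=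
        Finset.sum_le_sum_of_subset_of_nonneg hsubA (fun i _ _ => hnonneg v i)
      have h2 : (∑ k ∈ A, lam v k) ≤ B := hB.2 ⟨v, A, hAsub, hAcard, rfl⟩
      linarith
    -- main induction
    have main : ∀ m : ℕ, ∀ S : Finset (Fin n), S.card = m → S.card ≤ n - 1 →
        mu n lam x S ≠ 0 ∧ ∀ v ∈ S,
          r * ‖mu n lam x (S.erase v)‖ < ‖mu n lam x S‖ := by
      intro m
      induction m using Nat.strong_induction_on with
      | _ m IH =>
        intro S hSm hSn
        have hclaim2 : ∀ v ∈ S,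
            r * ‖mu n lam x (S.erase v)‖ < ‖mu n lam x S‖ := by
          intro v hv
          have hm1 : 1 ≤ m := by
            rw [← hSm]
            exact Finset.card_pos.mpr ⟨v, hv⟩
          have hec : (S.erase v).card = m - 1 := by
            rw [Finset.card_erase_of_mem hv, hSm]
          obtain ⟨hmu'ne, hIH2⟩ := IH (m - 1) (by omega) (S.erase v) hec
            (by rw [hec]; omega)
          have hmu'pos : 0 < ‖mu n lam x (S.erase v)‖ :=
            norm_pos_iff.mpr hmu'ne
          have h1 := mu_abs_lower lam x hsymm hnonneg hv
          have h2 : ∑ k ∈ S.erase v, lam v k * ‖mu n lam x ((S.erase v).erase k)‖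
              ≤ (∑ k ∈ S.erase v, lam v k) * (‖mu n lam x (S.erase v)‖ / r) := by
            rw [Finset.sum_mul]
            apply Finset.sum_le_sum
            intro k hk
            have hlt := le_of_lt (hIH2 k hk)
            have hle : ‖mu n lam x ((S.erase v).erase k)‖
                ≤ ‖mu n lam x (S.erase v)‖ / r := by
              rw [le_div_iff₀ hrpos]
              linarith [hlt]
            exact mul_le_mul_of_nonneg_left hle (hnonneg v k)
          have h3 : (∑ k ∈ S.erase v, lam v k) * (‖mu n lam x (S.erase v)‖ / r)
              ≤ B * (‖mu n lam x (S.erase v)‖ / r) :=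
            mul_le_mul_of_nonneg_right (hsum_le S v hv hSn) (by positivity)
          have hBr : B * (‖mu n lam x (S.erase v)‖ / r)
              = r * ‖mu n lam x (S.erase v)‖ := by
            rw [← hr2]; field_simp
          have h4 : 2 * r * ‖mu n lam x (S.erase v)‖
              < ‖x v‖ * ‖mu n lam x (S.erase v)‖ :=
            mul_lt_mul_of_pos_right (hx v) hmu'pos
          linarith
        refine ⟨?_, hclaim2⟩
        rcases Finset.eq_empty_or_nonempty S with rfl | ⟨v, hv⟩
        · rw [mu_empty]; exact one_ne_zero
        · have h := hclaim2 v hv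
          have habs0 : 0 ≤ ‖mu n lam x (S.erase v)‖ := norm_nonneg _
          intro hcon
          rw [hcon, norm_zero] at h
          nlinarith
    -- top level
    have hvmem : (⟨0, by omega⟩ : Fin n) ∈ (univ : Finset (Fin n)) := mem_univ _
    set v : Fin n := ⟨0, by omega⟩ with hv_def
    have hcard_univ : (univ : Finset (Fin n)).card = n := by simp
    have hcard_er : ((univ : Finset (Fin n)).erase v).card = n - 1 := by
      rw [Finset.card_erase_of_mem hvmem, hcard_univ]
    obtain ⟨hmu'ne, hIH2⟩ := main (n - 1) (univ.erase v) hcard_er (by omega)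
    have hmu'pos : 0 < ‖mu n lam x (univ.erase v)‖ := norm_pos_iff.mpr hmu'ne
    -- sum of weights at v over all other vertices is at most 2B
    have hsum2B : (∑ k ∈ univ.erase v, lam v k) ≤ 2 * B := by
      have hne2 : ((univ : Finset (Fin n)).erase v).Nonempty := by
        rw [← Finset.card_pos, hcard_er]; omega
      obtain ⟨k1, hk1, hk1min⟩ := Finset.exists_min_image (univ.erase v) (lam v) hne2
      have hAcard : ((univ.erase v).erase k1).card = n - 2 := by
        rw [Finset.card_erase_of_mem hk1, hcard_er]; omega
      have hAne : ((univ.erase v).erase k1).Nonempty := by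
        rw [← Finset.card_pos, hAcard]; omega
      obtain ⟨k2, hk2⟩ := hAne
      have hAsub : (univ.erase v).erase k1 ⊆ univ \ {v} := by
        intro w hw
        rw [Finset.mem_sdiff]
        exact ⟨mem_univ w, by simp [ne_of_mem_erase (mem_of_mem_erase hw)]⟩
      have hA_le_B : (∑ k ∈ (univ.erase v).erase k1, lam v k) ≤ B :=
        hB.2 ⟨v, _, hAsub, hAcard, rfl⟩
      have hk1_le : lam v k1 ≤ B := by
        have ha := hk1min k2 (mem_of_mem_erase hk2)
        have hb' : lam v k2 ≤ ∑ k ∈ (univ.erase v).erase k1, lam v k :=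
          Finset.single_le_sum (fun i _ => hnonneg v i) hk2
        linarith
      have hsplit : lam v k1 + (∑ k ∈ (univ.erase v).erase k1, lam v k)
          = ∑ k ∈ univ.erase v, lam v k := Finset.add_sum_erase _ _ hk1
      linarith
    have h1 := mu_abs_lower lam x hsymm hnonneg hvmem
    have h2 : ∑ k ∈ univ.erase v, lam v k * ‖mu n lam x ((univ.erase v).erase k)‖
        ≤ (∑ k ∈ univ.erase v, lam v k) * (‖mu n lam x (univ.erase v)‖ / r) := by
      rw [Finset.sum_mul]
      apply Finset.sum_le_sum
      intro k hk
      have hlt := le_of_lt (hIH2 k hk)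
      have hle : ‖mu n lam x ((univ.erase v).erase k)‖
          ≤ ‖mu n lam x (univ.erase v)‖ / r := by
        rw [le_div_iff₀ hrpos]
        linarith [hlt]
      exact mul_le_mul_of_nonneg_left hle (hnonneg v k)
    have h3 : (∑ k ∈ univ.erase v, lam v k) * (‖mu n lam x (univ.erase v)‖ / r)
        ≤ (2 * B) * (‖mu n lam x (univ.erase v)‖ / r) :=
      mul_le_mul_of_nonneg_right hsum2B (by positivity)
    have hBr : (2 * B) * (‖mu n lam x (univ.erase v)‖ / r)
        = 2 * r * ‖mu n lam x (univ.erase v)‖ := by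
      rw [← hr2]; field_simp
    have h4 : 2 * r * ‖mu n lam x (univ.erase v)‖
        < ‖x v‖ * ‖mu n lam x (univ.erase v)‖ :=
      mul_lt_mul_of_pos_right (hx v) hmu'pos
    intro hcon
    rw [hcon, norm_zero] at h1
    linarith
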